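/- arXiv:1707.02506 — 2 statements merged into one kernel-verified Lean document; each statement's English description precedes it below -/
import Mathlib

section
/- Define =^f on the powerset of ℕ×ℕ by A =^f B iff for every x ∈ ℕ, the x-th columns A^{[x]} = {y : (x,y) ∈ A} and B^{[x]} have the same cardinality. The quotient space P(ℕ×ℕ)/=^f (quotient of the product topology) is not homeomorphic to the Scott topology on P(ℕ). -/
open TopologicalSpace

/-- The Scott topology on the powerset of ℕ. -/
def scottTop : TopologicalSpace (Set ℕ) :=
  generateFrom {U | ∃ F : Finset ℕ, U = {A : Set ℕ | ↑F ⊆ A}}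

/-- The equivalence relation =^f : corresponding columns have the same cardinality. -/
def eqF (A B : ℕ × ℕ → Bool) : Prop :=
  ∀ x : ℕ, Cardinal.mk {y : ℕ | A (x, y) = true} = Cardinal.mk {y : ℕ | B (x, y) = true}

namespace EqFAux

/-- Reference points: column 0 has `k` elements, other columns empty. -/
def Bk (k : ℕ) : ℕ × ℕ → Bool := fun p => decide (p.1 = 0 ∧ p.2 < k)

lemma eqF_equiv : Equivalence eqF :=
  ⟨fun _ _ => rfl, fun h x => (h x).symm, fun h1 h2 x => (h1 x).trans (h2 x)⟩

lemma quot_mk_eq_iff {A B : ℕ × ℕ → Bool} :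
    Quot.mk eqF A = Quot.mk eqF B ↔ eqF A B := by
  rw [Quot.eq, eqF_equiv.eqvGen_iff]

lemma mk_coe_set (s : Finset ℕ) : Cardinal.mk (↑s : Set ℕ) = s.card :=
  Cardinal.mk_coe_finset

lemma col_Bk_zero (k : ℕ) : {y : ℕ | Bk k (0, y) = true} = (↑(Finset.range k) : Set ℕ) := by
  ext y; simp [Bk]

lemma col_Bk_ne (k x : ℕ) (hx : x ≠ 0) : {y : ℕ | Bk k (x, y) = true} = (∅ : Set ℕ) := by
  ext y; simp [Bk, hx]

lemma isOpen_coord (p : ℕ × ℕ) : IsOpen {B : ℕ × ℕ → Bool | B p = true} := by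
  have : {B : ℕ × ℕ → Bool | B p = true} = (fun B : ℕ × ℕ → Bool => B p) ⁻¹' {true} := by
    ext B; simp
  rw [this]
  exact (continuous_apply p).isOpen_preimage _ (isOpen_discrete _)

def V1 (x : ℕ) : Set (ℕ × ℕ → Bool) := {B | ∃ y, B (x, y) = true}

lemma isOpen_V1 (x : ℕ) : IsOpen (V1 x) := by
  have : V1 x = ⋃ y, {B : ℕ × ℕ → Bool | B (x, y) = true} := by
    ext B; simp [V1]
  rw [this]
  exact isOpen_iUnion fun y => isOpen_coord _

lemma sat_V1 (x : ℕ) {A B : ℕ × ℕ → Bool} (h : eqF A B) (hA : A ∈ V1 x) : B ∈ V1 x := by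
  have h0 : Cardinal.mk {y : ℕ | A (x, y) = true} ≠ 0 := by
    rw [Cardinal.mk_ne_zero_iff, Set.nonempty_coe_sort]
    obtain ⟨y, hy⟩ := hA
    exact ⟨y, hy⟩
  rw [h x, Cardinal.mk_ne_zero_iff, Set.nonempty_coe_sort] at h0
  obtain ⟨y, hy⟩ := h0
  exact ⟨y, hy⟩

def V3 : Set (ℕ × ℕ → Bool) :=
  {B | ∃ a b c : ℕ, a ≠ b ∧ a ≠ c ∧ b ≠ c ∧
    B (0, a) = true ∧ B (0, b) = true ∧ B (0, c) = true}

lemma isOpen_V3 : IsOpen V3 := by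
  have : V3 = ⋃ (a : ℕ) (b : ℕ) (c : ℕ) (_ : a ≠ b) (_ : a ≠ c) (_ : b ≠ c),
      ({B : ℕ × ℕ → Bool | B (0, a) = true} ∩
        ({B : ℕ × ℕ → Bool | B (0, b) = true} ∩ {B : ℕ × ℕ → Bool | B (0, c) = true})) := by
    ext B
    simp only [V3, Set.mem_setOf_eq, Set.mem_iUnion, Set.mem_inter_iff]
    constructor
    · rintro ⟨a, b, c, hab, hac, hbc, ha, hb, hc⟩
      exact ⟨a, b, c, hab, hac, hbc, ha, hb, hc⟩
    · rintro ⟨a, b, c, hab, hac, hbc, ha, hb, hc⟩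
      exact ⟨a, b, c, hab, hac, hbc, ha, hb, hc⟩
  rw [this]
  exact isOpen_iUnion fun a => isOpen_iUnion fun b => isOpen_iUnion fun c =>
    isOpen_iUnion fun _ => isOpen_iUnion fun _ => isOpen_iUnion fun _ =>
      (isOpen_coord _).inter ((isOpen_coord _).inter (isOpen_coord _))

lemma small_cases (s : Set ℕ)
    (h : ¬ ∃ a b c : ℕ, a ≠ b ∧ a ≠ c ∧ b ≠ c ∧ a ∈ s ∧ b ∈ s ∧ c ∈ s) :
    s = (∅ : Set ℕ) ∨ (∃ a, s = {a}) ∨ (∃ a b, a ≠ b ∧ s = {a, b}) := by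
  by_cases h1 : ∃ a, a ∈ s
  · obtain ⟨a, ha⟩ := h1
    by_cases h2 : ∃ b, b ∈ s ∧ b ≠ a
    · obtain ⟨b, hb, hba⟩ := h2
      right; right
      refine ⟨a, b, hba.symm, ?_⟩
      ext c
      simp only [Set.mem_insert_iff, Set.mem_singleton_iff]
      constructor
      · intro hc
        by_contra hcc
        push_neg at hcc
        exact h ⟨a, b, c, hba.symm, Ne.symm hcc.1, Ne.symm hcc.2, ha, hb, hc⟩
      · rintro (rfl | rfl) <;> assumption
    · push_neg at h2
      right; left
      refine ⟨a, ?_⟩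
      ext b
      simp only [Set.mem_singleton_iff]
      exact ⟨fun hb => h2 b hb, fun hb => hb ▸ ha⟩
  · push_neg at h1
    left
    ext b
    simp [h1 b]

lemma mk_le_two_of_small (s : Set ℕ)
    (h : ¬ ∃ a b c : ℕ, a ≠ b ∧ a ≠ c ∧ b ≠ c ∧ a ∈ s ∧ b ∈ s ∧ c ∈ s) :
    Cardinal.mk s ≤ ((2 : ℕ) : Cardinal) := by
  rcases small_cases s h with rfl | ⟨a, rfl⟩ | ⟨a, b, hab, rfl⟩
  · have : ((∅ : Set ℕ)) = (↑(∅ : Finset ℕ) : Set ℕ) := by simp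
    rw [this, mk_coe_set]
    exact Nat.cast_le.mpr (by simp)
  · have : ({a} : Set ℕ) = (↑({a} : Finset ℕ) : Set ℕ) := by simp
    rw [this, mk_coe_set]
    exact Nat.cast_le.mpr (by simp)
  · have : ({a, b} : Set ℕ) = (↑({a, b} : Finset ℕ) : Set ℕ) := by simp
    rw [this, mk_coe_set]
    exact Nat.cast_le.mpr (by simp [Finset.card_insert_of_notMem, hab])

lemma three_le_mk {s : Set ℕ} {a b c : ℕ} (hab : a ≠ b) (hac : a ≠ c) (hbc : b ≠ c)
    (ha : a ∈ s) (hb : b ∈ s) (hc : c ∈ s) :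
    ((3 : ℕ) : Cardinal) ≤ Cardinal.mk s := by
  have hsub : (↑({a, b, c} : Finset ℕ) : Set ℕ) ⊆ s := by
    intro x hx
    simp only [Finset.coe_insert, Finset.coe_singleton, Set.mem_insert_iff,
      Set.mem_singleton_iff] at hx
    rcases hx with rfl | rfl | rfl <;> assumption
  have hcard : ({a, b, c} : Finset ℕ).card = 3 := by
    rw [Finset.card_insert_of_notMem (by simp [hab, hac]),
      Finset.card_insert_of_notMem (by simp [hbc])]
    simp
  calc ((3 : ℕ) : Cardinal) = Cardinal.mk (↑({a, b, c} : Finset ℕ) : Set ℕ) := by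
        rw [mk_coe_set, hcard]
    _ ≤ Cardinal.mk s := Cardinal.mk_le_mk_of_subset hsub

lemma sat_V3 {A B : ℕ × ℕ → Bool} (h : eqF A B) (hA : A ∈ V3) : B ∈ V3 := by
  obtain ⟨a, b, c, hab, hac, hbc, ha, hb, hc⟩ := hA
  by_contra hB
  have h2 : Cardinal.mk {y : ℕ | B (0, y) = true} ≤ ((2 : ℕ) : Cardinal) :=
    mk_le_two_of_small _ (by exact hB)
  have h3 : ((3 : ℕ) : Cardinal) ≤ Cardinal.mk {y : ℕ | A (0, y) = true} :=
    three_le_mk hab hac hbc ha hb hc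
  rw [h 0] at h3
  have : (3 : ℕ) ≤ 2 := Nat.cast_le.mp (h3.trans h2)
  omega

/-- Transfer along the closure in the quotient: if `C`'s class is in the closure of `D`'s
class and `C` lies in a saturated open `V`, then `D ∈ V`. -/
lemma closure_transfer {V : Set (ℕ × ℕ → Bool)} (hV : IsOpen V)
    (hsat : ∀ A B : ℕ × ℕ → Bool, eqF A B → A ∈ V → B ∈ V) {C D : ℕ × ℕ → Bool}
    (hC : Quot.mk eqF C ∈ closure {Quot.mk eqF D}) (hCV : C ∈ V) : D ∈ V := by
  have hpre : Quot.mk eqF ⁻¹' (Quot.mk eqF '' V) = V := by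
    ext B
    constructor
    · rintro ⟨B', hB', hEq⟩
      exact hsat B' B (quot_mk_eq_iff.mp hEq) hB'
    · intro hB
      exact ⟨B, hB, rfl⟩
  have hU : IsOpen (Quot.mk eqF '' V) := by
    rw [isOpen_coinduced, hpre]
    exact hV
  obtain ⟨q, hqU, hq⟩ := mem_closure_iff.mp hC _ hU ⟨C, hCV, rfl⟩
  rw [Set.mem_singleton_iff] at hq
  subst hq
  obtain ⟨B', hB', hEq⟩ := hqU
  exact hsat B' D (quot_mk_eq_iff.mp hEq) hB'

lemma mem_closure_part (k : ℕ) (hk : k ≤ 2) :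
    Quot.mk eqF (Bk k) ∈ closure {Quot.mk eqF (Bk 2)} := by
  rw [mem_closure_iff]
  intro U hU hkU
  have hVopen : IsOpen (Quot.mk eqF ⁻¹' U) := hU.preimage continuous_quot_mk
  obtain ⟨I, u, hIu, hsub⟩ := isOpen_pi_iff.mp hVopen (Bk k) hkU
  set N : ℕ := I.sup Prod.snd + 1 with hN
  set g : ℕ × ℕ → Bool :=
    fun p => Bk k p || decide (p.1 = 0 ∧ N ≤ p.2 ∧ p.2 < N + (2 - k)) with hg
  have hgI : ∀ i ∈ I, g i = Bk k i := by
    intro i hi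
    have h2 : i.2 < N := Nat.lt_succ_of_le (Finset.le_sup hi)
    have hdec : decide (i.1 = 0 ∧ N ≤ i.2 ∧ i.2 < N + (2 - k)) = false := by
      simp only [decide_eq_false_iff_not]
      omega
    simp only [hg, hdec, Bool.or_false]
  have hgV : g ∈ Quot.mk eqF ⁻¹' U := by
    apply hsub
    intro i hi
    rw [Finset.mem_coe] at hi
    rw [hgI i hi]
    exact (hIu i hi).2
  have hEq : Quot.mk eqF g = Quot.mk eqF (Bk 2) := by
    apply Quot.sound
    intro x
    by_cases hx : x = 0
    · subst hx
      have hcolg : {y : ℕ | g (0, y) = true} =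
          (↑(Finset.range k ∪ Finset.Ico N (N + (2 - k))) : Set ℕ) := by
        ext y
        simp only [hg, Set.mem_setOf_eq, Bool.or_eq_true, decide_eq_true_eq, Bk,
          Finset.coe_union, Set.mem_union, Finset.mem_coe, Finset.mem_range, Finset.mem_Ico]
        tauto
      rw [hcolg, col_Bk_zero, mk_coe_set, mk_coe_set]
      congr 1
      have hdisj : Disjoint (Finset.range k) (Finset.Ico N (N + (2 - k))) := by
        rw [Finset.disjoint_left]
        intro y hy1 hy2
        rw [Finset.mem_range] at hy1
        rw [Finset.mem_Ico] at hy2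
        omega
      rw [Finset.card_union_of_disjoint hdisj, Finset.card_range, Finset.card_range,
        Nat.card_Ico]
      omega
    · have hcolg : {y : ℕ | g (x, y) = true} = (∅ : Set ℕ) := by
        ext y
        simp [hg, Bk, hx]
      rw [hcolg, col_Bk_ne 2 x hx]
  refine ⟨Quot.mk eqF (Bk 2), ?_, rfl⟩
  rw [← hEq]
  exact hgV

lemma quot_closure :
    closure {Quot.mk eqF (Bk 2)} =
      {Quot.mk eqF (Bk 0), Quot.mk eqF (Bk 1), Quot.mk eqF (Bk 2)} := by
  ext q
  constructor
  · intro hq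
    obtain ⟨C, rfl⟩ := Quot.exists_rep q
    have hcols : ∀ x, x ≠ 0 → ∀ y, ¬ (C (x, y) = true) := by
      intro x hx y hy
      have hB2 : Bk 2 ∈ V1 x :=
        closure_transfer (isOpen_V1 x) (fun A B h hA => sat_V1 x h hA) hq ⟨y, hy⟩
      obtain ⟨y', hy'⟩ := hB2
      simp [Bk, hx] at hy'
    have hnot3 : ¬ ∃ a b c : ℕ, a ≠ b ∧ a ≠ c ∧ b ≠ c ∧
        a ∈ {y : ℕ | C (0, y) = true} ∧ b ∈ {y : ℕ | C (0, y) = true} ∧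
        c ∈ {y : ℕ | C (0, y) = true} := by
      rintro ⟨a, b, c, hab, hac, hbc, ha, hb, hc⟩
      have hCV3 : C ∈ V3 := ⟨a, b, c, hab, hac, hbc, ha, hb, hc⟩
      have hB2 : Bk 2 ∈ V3 :=
        closure_transfer isOpen_V3 (fun A B h hA => sat_V3 h hA) hq hCV3
      obtain ⟨a', b', c', hab', hac', hbc', ha', hb', hc'⟩ := hB2
      simp only [Bk, decide_eq_true_eq] at ha' hb' hc'
      omega
    have hcol_ne : ∀ (x : ℕ), x ≠ 0 → {y : ℕ | C (x, y) = true} = (∅ : Set ℕ) := by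
      intro x hx
      ext y
      simp [hcols x hx y]
    rcases small_cases _ hnot3 with h0 | ⟨a, h1⟩ | ⟨a, b, hab, h2⟩
    · left
      apply Quot.sound
      intro x
      by_cases hx : x = 0
      · subst hx
        rw [h0, col_Bk_zero]
        simp
      · rw [hcol_ne x hx, col_Bk_ne 0 x hx]
    · right; left
      apply Quot.sound
      intro x
      by_cases hx : x = 0
      · subst hx
        rw [h1, col_Bk_zero]
        have h1' : ({a} : Set ℕ) = (↑({a} : Finset ℕ) : Set ℕ) := by simp
        rw [h1', mk_coe_set, mk_coe_set]
        simp
      · rw [hcol_ne x hx, col_Bk_ne 1 x hx]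
    · right; right
      apply Quot.sound
      intro x
      by_cases hx : x = 0
      · subst hx
        rw [h2, col_Bk_zero]
        have h2' : ({a, b} : Set ℕ) = (↑({a, b} : Finset ℕ) : Set ℕ) := by simp
        rw [h2', mk_coe_set, mk_coe_set]
        congr 1
        rw [Finset.card_insert_of_notMem (by simp [hab]), Finset.card_singleton,
          Finset.card_range]
      · rw [hcol_ne x hx, col_Bk_ne 2 x hx]
  · intro hq
    rcases hq with rfl | rfl | rfl
    · exact mem_closure_part 0 (by omega)
    · exact mem_closure_part 1 (by omega)
    · exact mem_closure_part 2 (by omega)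

lemma Bk_ne {i j : ℕ} (hij : i ≠ j) : Quot.mk eqF (Bk i) ≠ Quot.mk eqF (Bk j) := by
  intro hEq
  have h := quot_mk_eq_iff.mp hEq 0
  rw [col_Bk_zero, col_Bk_zero, mk_coe_set, mk_coe_set, Finset.card_range,
    Finset.card_range] at h
  exact hij (Nat.cast_injective h)

/-- The topology of upward-closed sets. -/
def upTop : TopologicalSpace (Set ℕ) where
  IsOpen U := ∀ A B : Set ℕ, A ∈ U → A ⊆ B → B ∈ U
  isOpen_univ := fun _ _ _ _ => trivial
  isOpen_inter := fun s t hs ht A B hA hAB => ⟨hs A B hA.1 hAB, ht A B hA.2 hAB⟩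
  isOpen_sUnion := fun S hS A B hA hAB => by
    obtain ⟨s, hs, hAs⟩ := hA
    exact ⟨s, hs, hS s hs A B hAs hAB⟩

lemma upTop_le_scottTop : upTop ≤ scottTop := by
  apply le_generateFrom
  rintro U ⟨F, rfl⟩
  intro A B hA hAB
  exact hA.trans hAB

/-- Scott-open sets are upward closed. -/
lemma scott_upward {U : Set (Set ℕ)} (hU : @IsOpen _ scottTop U) :
    ∀ A B : Set ℕ, A ∈ U → A ⊆ B → B ∈ U :=
  hU.mono upTop_le_scottTop

lemma scott_closure (A : Set ℕ) :
    @closure _ scottTop {A} = {B : Set ℕ | B ⊆ A} := by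
  letI := scottTop
  ext B
  rw [mem_closure_iff]
  constructor
  · intro h n hn
    have hop : IsOpen {C : Set ℕ | ↑({n} : Finset ℕ) ⊆ C} :=
      TopologicalSpace.isOpen_generateFrom_of_mem ⟨{n}, rfl⟩
    have hBmem : B ∈ {C : Set ℕ | ↑({n} : Finset ℕ) ⊆ C} := by
      intro m hm
      simp only [Finset.coe_singleton, Set.mem_singleton_iff] at hm
      exact hm ▸ hn
    obtain ⟨q, hq1, hq2⟩ := h _ hop hBmem
    rw [Set.mem_singleton_iff] at hq2
    subst hq2
    have := hq1 (show n ∈ (↑({n} : Finset ℕ) : Set ℕ) by simp)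
    exact this
  · intro hBA o ho hBo
    exact ⟨A, scott_upward ho B A hBo hBA, rfl⟩

lemma no_three_subsets (A X Y Z : Set ℕ) (hXY : X ≠ Y) (hXZ : X ≠ Z) (hYZ : Y ≠ Z)
    (h : {B : Set ℕ | B ⊆ A} = {X, Y, Z}) : False := by
  classical
  have hmem : ∀ B : Set ℕ, B ⊆ A → B = X ∨ B = Y ∨ B = Z := by
    intro B hB
    have : B ∈ ({X, Y, Z} : Set (Set ℕ)) := h ▸ hB
    simpa using this
  have hsub : ∀ W : Set ℕ, W ∈ ({X, Y, Z} : Set (Set ℕ)) → W ⊆ A := by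
    intro W hW
    have : W ∈ {B : Set ℕ | B ⊆ A} := h ▸ hW
    exact this
  by_cases hA : A = ∅
  · subst hA
    have hX : X = ∅ := Set.subset_eq_empty (hsub X (by simp)) rfl
    have hY : Y = ∅ := Set.subset_eq_empty (hsub Y (by simp)) rfl
    exact hXY (hX.trans hY.symm)
  · obtain ⟨a, ha⟩ := Set.nonempty_iff_ne_empty.mpr hA
    by_cases hA2 : ∃ b ∈ A, b ≠ a
    · obtain ⟨b, hb, hba⟩ := hA2
      -- four distinct subsets of A: ∅, {a}, {b}, A
      have d1 : (∅ : Set ℕ) ≠ {a} := Ne.symm (Set.singleton_ne_empty a)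
      have d2 : (∅ : Set ℕ) ≠ {b} := Ne.symm (Set.singleton_ne_empty b)
      have d3 : (∅ : Set ℕ) ≠ A := fun hh => hA hh.symm
      have d4 : ({a} : Set ℕ) ≠ {b} := by simp [Ne.symm hba]
      have d5 : ({a} : Set ℕ) ≠ A := by
        intro hh
        rw [← hh] at hb
        exact hba hb
      have d6 : ({b} : Set ℕ) ≠ A := by
        intro hh
        rw [← hh] at ha
        exact hba (ha.symm ▸ rfl)
      have hc : ({∅, {a}, {b}, A} : Finset (Set ℕ)) ⊆ ({X, Y, Z} : Finset (Set ℕ)) := by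
        intro s hs
        simp only [Finset.mem_insert, Finset.mem_singleton] at hs ⊢
        rcases hs with rfl | rfl | rfl | rfl
        · exact hmem _ (Set.empty_subset A)
        · exact hmem _ (Set.singleton_subset_iff.mpr ha)
        · exact hmem _ (Set.singleton_subset_iff.mpr hb)
        · exact hmem _ subset_rfl
      have hcard4 : ({∅, {a}, {b}, A} : Finset (Set ℕ)).card = 4 := by
        rw [Finset.card_insert_of_notMem (by simp [d1, d2, d3]),
          Finset.card_insert_of_notMem (by simp [d4, d5]),
          Finset.card_insert_of_notMem (by simp [d6]),
          Finset.card_singleton]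
      have hcard3 : ({X, Y, Z} : Finset (Set ℕ)).card ≤ 3 := by
        apply le_trans (Finset.card_insert_le _ _)
        have := Finset.card_insert_le Y ({Z} : Finset (Set ℕ))
        simp at this ⊢
        omega
      have := Finset.card_le_card hc
      omega
    · -- A = {a}
      push_neg at hA2
      have hAa : A = {a} := by
        ext c
        simp only [Set.mem_singleton_iff]
        exact ⟨fun hc => hA2 c hc, fun hc => hc ▸ ha⟩
      have hX := hmem X (hsub X (by simp))
      have hopt : ∀ W : Set ℕ, W ∈ ({X, Y, Z} : Set (Set ℕ)) → W = ∅ ∨ W = {a} := by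
        intro W hW
        have := hsub W hW
        rw [hAa] at this
        exact Set.subset_singleton_iff_eq.mp this
      have hXo := hopt X (by simp)
      have hYo := hopt Y (by simp)
      have hZo := hopt Z (by simp)
      rcases hXo with rfl | rfl <;> rcases hYo with hY | hY <;>
        rcases hZo with hZ | hZ <;> first
        | exact hXY hY.symm
        | exact hXZ hZ.symm
        | exact hYZ (hY.trans hZ.symm)

end EqFAux

open EqFAux in
/-- The quotient 2^{ℕ×ℕ}/=^f (with the quotient of the product topology) is not
homeomorphic to the powerset of ℕ with the Scott topology. -/
theorem quotient_eqF_not_homeomorph_scott :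
    IsEmpty (@Homeomorph (Quot eqF) (Set ℕ) _ scottTop) := by
  constructor
  intro h
  letI : TopologicalSpace (Set ℕ) := scottTop
  have hcl : closure {Quot.mk eqF (Bk 2)} =
      {Quot.mk eqF (Bk 0), Quot.mk eqF (Bk 1), Quot.mk eqF (Bk 2)} := quot_closure
  have himg : closure {h (Quot.mk eqF (Bk 2))} =
      {h (Quot.mk eqF (Bk 0)), h (Quot.mk eqF (Bk 1)), h (Quot.mk eqF (Bk 2))} := by
    rw [← Set.image_singleton, ← Homeomorph.image_closure, hcl,
      Set.image_insert_eq, Set.image_insert_eq, Set.image_singleton]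
  have hsc : {B : Set ℕ | B ⊆ h (Quot.mk eqF (Bk 2))} =
      {h (Quot.mk eqF (Bk 0)), h (Quot.mk eqF (Bk 1)), h (Quot.mk eqF (Bk 2))} := by
    rw [← scott_closure (h (Quot.mk eqF (Bk 2)))]
    exact himg
  exact no_three_subsets _ _ _ _
    (fun he => Bk_ne (by omega : (0:ℕ) ≠ 1) (h.injective he))
    (fun he => Bk_ne (by omega : (0:ℕ) ≠ 2) (h.injective he))
    (fun he => Bk_ne (by omega : (1:ℕ) ≠ 2) (h.injective he))
    hsc
end

section
/- Two algebraic extensions F and K of ℚ (subfields of a fixed algebraic closure, or abstract countable algebraic fields of characteristic 0) are isomorphic if and only if every polynomial in ℚ[X] that has a root in F also has a root in K and vice versa. -/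
open Polynomial

/-- Two countable algebraic extensions of ℚ are isomorphic iff every rational
polynomial with a root in one has a root in the other, and vice versa. -/
theorem algebraic_fields_iso_iff_same_roots
    (F K : Type) [Field F] [Field K] [Algebra ℚ F] [Algebra ℚ K]
    [Algebra.IsAlgebraic ℚ F] [Algebra.IsAlgebraic ℚ K]
    [Countable F] [Countable K] :
    Nonempty (F ≃+* K) ↔
      ∀ p : Polynomial ℚ,
        (∃ x : F, aeval x p = 0) ↔ (∃ y : K, aeval y p = 0) := by
  constructor
  · rintro ⟨e⟩ p
    have he : ∀ (x : F), aeval (e x) p = e (aeval x p) := by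
      intro x
      exact (Polynomial.aeval_algHom_apply e.toRingHom.toRatAlgHom x p)
    constructor
    · rintro ⟨x, hx⟩
      exact ⟨e x, by rw [he, hx, map_zero]⟩
    · rintro ⟨y, hy⟩
      refine ⟨e.symm y, ?_⟩
      have := he (e.symm y)
      rw [e.apply_symm_apply] at this
      have h0 : e (aeval (e.symm y) p) = 0 := by rw [← this, hy]
      exact e.injective (by rw [h0, map_zero])
  · intro h
    have heq : {p : ℚ[X] | ∃ x : F, aeval x p = 0} = {p | ∃ y : K, aeval y p = 0} :=
      Set.ext fun p => h p
    obtain ⟨e⟩ := Field.nonempty_algEquiv_of_aeval_eq_zero_eq (F := ℚ) heq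
    exact ⟨e.toRingEquiv⟩
end
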